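/- Upper bound via degrees: for events A_1,...,A_N in a finite probability space, P(⋃_{i=1}^N A_i) ≤ ∑_{i=1}^N P(A_i) − (1/N)·∑_{i=1}^N ∑_{j≠i} P(A_i ∩ A_j). -/

import Mathlib

open MeasureTheory Finset

open Classical in
lemma meas_toReal_sum {Ω : Type*} [Fintype Ω] [MeasurableSpace Ω]
    [DiscreteMeasurableSpace Ω] (P : Measure Ω) [IsProbabilityMeasure P] (S : Set Ω) :
    (P S).toReal = ∑ ω : Ω, if ω ∈ S then (P {ω}).toReal else 0 := by
  classical
  have h1 : S = ⋃ ω ∈ univ.filter (· ∈ S), ({ω} : Set Ω) := by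
    ext x; simp
  have h2 : P S = ∑ ω ∈ univ.filter (· ∈ S), P {ω} := by
    conv_lhs => rw [h1]
    rw [measure_biUnion_finset]
    · intro a _ b _ hab
      simp [Function.onFun, Set.disjoint_singleton_left, hab]
    · exact fun b _ => MeasurableSet.of_discrete
  rw [h2, ENNReal.toReal_sum (fun a _ => measure_ne_top P _), Finset.sum_filter]

theorem union_upper_bound_degrees {Ω : Type*} [Fintype Ω] [MeasurableSpace Ω]
    [DiscreteMeasurableSpace Ω] (P : Measure Ω) [IsProbabilityMeasure P] (N : ℕ)
    (hN : 0 < N) (A : Fin N → Set Ω) :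
    (P (⋃ i, A i)).toReal ≤
      ∑ i : Fin N, (P (A i)).toReal -
        (1 / N) * ∑ i : Fin N, ∑ j ∈ Finset.univ.filter (fun j => j ≠ i),
          (P (A i ∩ A j)).toReal := by
  classical
  set p : Ω → ℝ := fun ω => (P {ω}).toReal with hp
  have hp0 : ∀ ω, 0 ≤ p ω := fun ω => ENNReal.toReal_nonneg
  set d : Ω → ℕ := fun ω => (univ.filter (fun i : Fin N => ω ∈ A i)).card with hd
  have hdN : ∀ ω, d ω ≤ N := fun ω => by
    simpa using Finset.card_filter_le univ (fun i : Fin N => ω ∈ A i)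
  rw [meas_toReal_sum]
  have hA : ∀ i, (P (A i)).toReal = ∑ ω : Ω, if ω ∈ A i then p ω else 0 :=
    fun i => meas_toReal_sum P (A i)
  have hAB : ∀ i j, (P (A i ∩ A j)).toReal
      = ∑ ω : Ω, if ω ∈ A i ∧ ω ∈ A j then p ω else 0 := by
    intro i j
    rw [meas_toReal_sum]
    simp only [Set.mem_inter_iff]
    rfl
  simp only [hA, hAB]
  have swap1 : ∑ i : Fin N, ∑ ω : Ω, (if ω ∈ A i then p ω else 0)
      = ∑ ω : Ω, ∑ i : Fin N, (if ω ∈ A i then p ω else 0) := Finset.sum_comm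
  have swap2 : ∑ i : Fin N, ∑ j ∈ univ.filter (fun j => j ≠ i),
        ∑ ω : Ω, (if ω ∈ A i ∧ ω ∈ A j then p ω else 0)
      = ∑ ω : Ω, ∑ i : Fin N, ∑ j ∈ univ.filter (fun j => j ≠ i),
        (if ω ∈ A i ∧ ω ∈ A j then p ω else 0) := by
    rw [Finset.sum_comm]
    congr 1; ext i
    rw [Finset.sum_comm]
  rw [swap1, swap2, Finset.mul_sum, ← Finset.sum_sub_distrib]
  apply Finset.sum_le_sum
  intro ω _
  have hsum1 : ∑ i : Fin N, (if ω ∈ A i then p ω else 0) = (d ω : ℝ) * p ω := by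
    rw [← Finset.sum_filter, Finset.sum_const, nsmul_eq_mul]
  have hsum2 : ∑ i : Fin N, ∑ j ∈ univ.filter (fun j => j ≠ i),
      (if ω ∈ A i ∧ ω ∈ A j then p ω else 0) = (d ω : ℝ) * ((d ω : ℝ) - 1) * p ω := by
    have key : ∀ i : Fin N, ∑ j ∈ univ.filter (fun j => j ≠ i),
        (if ω ∈ A i ∧ ω ∈ A j then p ω else 0)
        = if ω ∈ A i then ((d ω : ℝ) - 1) * p ω else 0 := by
      intro i
      by_cases hi : ω ∈ A i
      · simp only [hi, true_and, if_pos]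
        rw [← Finset.sum_filter, Finset.filter_filter, Finset.sum_const, nsmul_eq_mul]
        congr 1
        have he : (univ.filter fun j : Fin N => j ≠ i ∧ ω ∈ A j)
            = (univ.filter fun j : Fin N => ω ∈ A j).erase i := by
          ext x; simp [and_comm]
        rw [he, Finset.card_erase_of_mem (by simp [hi])]
        have hd1 : 1 ≤ d ω := Finset.card_pos.mpr ⟨i, by simp [hi]⟩
        rw [Nat.cast_sub hd1, Nat.cast_one]
      · simp [hi]
    rw [Finset.sum_congr rfl (fun i _ => key i), ← Finset.sum_filter, Finset.sum_const,
      nsmul_eq_mul]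
    ring
  rw [hsum1, hsum2]
  by_cases hmem : ω ∈ ⋃ i, A i
  · rw [if_pos hmem]
    obtain ⟨_, ⟨i, rfl⟩, hi⟩ := hmem
    have hd1 : (1 : ℝ) ≤ (d ω : ℝ) := by
      exact_mod_cast Finset.card_pos.mpr ⟨i, by simp [hi]⟩
    have hdN' : (d ω : ℝ) ≤ N := by exact_mod_cast hdN ω
    have hN' : (0 : ℝ) < N := by exact_mod_cast hN
    have h1 : ((N:ℝ))⁻¹ * ((d ω : ℝ) * ((d ω : ℝ) - 1) * p ω) ≤ ((d ω : ℝ) - 1) * p ω := by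
      rw [inv_mul_le_iff₀ hN']
      nlinarith [mul_nonneg (mul_nonneg (hp0 ω) (by linarith : (0:ℝ) ≤ (d ω : ℝ) - 1))
        (by linarith : (0:ℝ) ≤ (N : ℝ) - (d ω : ℝ))]
    have h2 : (d ω : ℝ) * p ω = p ω + ((d ω : ℝ) - 1) * p ω := by ring
    rw [le_sub_iff_add_le, one_div]
    show p ω + _ ≤ _
    linarith
  · rw [if_neg hmem]
    have hd0 : d ω = 0 := by
      simp only [hd, Finset.card_eq_zero, Finset.filter_eq_empty_iff]
      intro i _ hi
      exact hmem (Set.mem_iUnion.mpr ⟨i, hi⟩)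
    simp [hd0]
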